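/- arXiv:2603.03873 — 4 statements merged into one kernel-verified Lean document; each statement's English description precedes it below -/
import Mathlib

section
/- If s ∈ X·O_K[[X]] is a formal power series over the ring of integers of a finite extension K of ℚ_p whose linear coefficient s'(0) is neither zero nor a root of unity and has positive valuation or is a non-root-of-unity unit, then there exists a unique formal power series Log_s ∈ X·K[[X]] with Log_s'(0) = 1 satisfying Log_s(s(X)) = s'(0)·Log_s(X). -/
open PowerSeries

noncomputable def PSComp {R : Type*} [CommRing R] (f g : PowerSeries R) : PowerSeries R :=
  PowerSeries.mk fun n => ((f.trunc (n + 1)).comp (g.trunc (n + 1))).coeff n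

lemma coeff_PSComp {R : Type*} [CommRing R] (f g : PowerSeries R) (n : ℕ) :
    coeff (R := R) n (PSComp f g) =
      ∑ k ∈ Finset.range (n + 1), coeff (R := R) k f * coeff (R := R) n (g ^ k) := by
  have h1 : (f.trunc (n + 1)).comp (g.trunc (n + 1)) =
      ∑ i ∈ Finset.range (n + 1), Polynomial.C (coeff (R := R) i f) * (g.trunc (n + 1)) ^ i := by
    rw [Polynomial.comp, eval₂_trunc_eq_sum_range]
  have h2 : ∀ k, (g.trunc (n + 1) ^ k).coeff n = coeff (R := R) n (g ^ k) := by
    intro k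
    have hc : ((g.trunc (n + 1) ^ k : Polynomial R) : PowerSeries R)
        = ((g.trunc (n + 1) : PowerSeries R)) ^ k := by push_cast; ring
    rw [← Polynomial.coeff_coe, hc]
    have h3 := congrArg (fun q : Polynomial R => q.coeff n)
      (PowerSeries.trunc_trunc_pow g (n + 1) k)
    simp only [PowerSeries.coeff_trunc, if_pos (Nat.lt_succ_self n)] at h3
    exact h3
  simp [PSComp, h1, Polynomial.finset_sum_coeff, Polynomial.coeff_C_mul, h2]

lemma coeff_self_pow {R : Type*} [CommRing R] (s : PowerSeries R)
    (h0 : constantCoeff (R := R) s = 0) (n : ℕ) : coeff (R := R) n (s ^ n) = (coeff (R := R) 1 s) ^ n := by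
  obtain ⟨t, rfl⟩ := PowerSeries.X_dvd_iff.mpr h0
  rw [mul_pow]
  have h : coeff (R := R) n (X ^ n * t ^ n) = coeff (R := R) 0 (t ^ n) := by
    simpa using PowerSeries.coeff_X_pow_mul (t ^ n) n 0
  have h1 : coeff (R := R) 1 (X * t) = constantCoeff (R := R) t := by
    simpa using PowerSeries.coeff_succ_X_mul 0 t
  rw [h, h1, coeff_zero_eq_constantCoeff, map_pow]

noncomputable def logCoeff {K : Type*} [Field K] (s : PowerSeries K) : ℕ → K
  | 0 => 0
  | 1 => 1
  | n + 2 =>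
    (∑ k ∈ (Finset.range (n + 2)).attach,
        logCoeff s k.1 * PowerSeries.coeff (R := K) (n + 2) (s ^ k.1)) /
      (PowerSeries.coeff (R := K) 1 s - PowerSeries.coeff (R := K) 1 s ^ (n + 2))
  termination_by n => n
  decreasing_by exact Finset.mem_range.mp k.2

lemma logCoeff_eq {K : Type*} [Field K] (s : PowerSeries K) (n : ℕ) (hn : 2 ≤ n) :
    logCoeff s n = (∑ k ∈ Finset.range n, logCoeff s k * PowerSeries.coeff (R := K) n (s ^ k)) /
      (PowerSeries.coeff (R := K) 1 s - PowerSeries.coeff (R := K) 1 s ^ n) := by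
  obtain ⟨m, rfl⟩ := Nat.exists_eq_add_of_le hn
  rw [show 2 + m = m + 2 by ring, logCoeff, ← Finset.sum_attach (Finset.range (m + 2))]

/-- Existence and uniqueness of the Lubin logarithm: if `s ∈ X·O_K[[X]]` over the ring of
integers of a finite extension `K` of `ℚ_p` has linear coefficient `s'(0)` which is neither
zero nor a root of unity, then there is a unique `Log_s ∈ X·K[[X]]` with `Log_s'(0) = 1` and
`Log_s ∘ s = s'(0) · Log_s`. -/
theorem exists_unique_logarithm
    {p : ℕ} [Fact p.Prime] (K : Type*) [NormedField K]
    [Algebra ℚ_[p] K] [FiniteDimensional ℚ_[p] K]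
    (hiso : ∀ x : ℚ_[p], ‖algebraMap ℚ_[p] K x‖ = ‖x‖)
    (hna : ∀ x y : K, ‖x + y‖ ≤ max ‖x‖ ‖y‖)
    (s : PowerSeries K)
    (hint : ∀ n : ℕ, ‖PowerSeries.coeff (R := K) n s‖ ≤ 1)
    (h0 : PowerSeries.constantCoeff (R := K) s = 0)
    (hne : PowerSeries.coeff (R := K) 1 s ≠ 0)
    (hru : ∀ n : ℕ, 0 < n → (PowerSeries.coeff (R := K) 1 s) ^ n ≠ 1) :
    ∃! g : PowerSeries K,
      PowerSeries.constantCoeff (R := K) g = 0 ∧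
      PowerSeries.coeff (R := K) 1 g = 1 ∧
      PSComp g s = PowerSeries.C (R := K) (PowerSeries.coeff (R := K) 1 s) * g := by
  set π := PowerSeries.coeff (R := K) 1 s with hπ
  have hd : ∀ n : ℕ, 2 ≤ n → π - π ^ n ≠ 0 := by
    intro n hn
    rw [sub_ne_zero]
    intro h
    obtain ⟨m, rfl⟩ := Nat.exists_eq_add_of_le hn
    have key : π * π ^ (1 + m) = π * 1 := by
      rw [mul_one]
      calc π * π ^ (1 + m) = π ^ (2 + m) := by ring
        _ = π := h.symm
    exact hru (1 + m) (by omega) (mul_left_cancel₀ hne key)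
  -- reformulate the composition equation coefficientwise
  have hchar : ∀ g : PowerSeries K,
      (PSComp g s = PowerSeries.C (R := K) π * g ↔
        ∀ n : ℕ, ∑ k ∈ Finset.range (n + 1),
          PowerSeries.coeff (R := K) k g * PowerSeries.coeff (R := K) n (s ^ k) = π * PowerSeries.coeff (R := K) n g) := by
    intro g
    constructor
    · intro h n
      have := congrArg (PowerSeries.coeff (R := K) n) h
      rwa [coeff_PSComp, PowerSeries.coeff_C_mul] at this
    · intro h
      ext n
      rw [coeff_PSComp, PowerSeries.coeff_C_mul]
      exact h n
  set a : ℕ → K := logCoeff s with ha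
  have ha0 : a 0 = 0 := by rw [ha, logCoeff]
  have ha1 : a 1 = 1 := by rw [ha, logCoeff]
  have hsum : ∀ n : ℕ,
      ∑ k ∈ Finset.range (n + 1), a k * PowerSeries.coeff (R := K) n (s ^ k) = π * a n := by
    intro n
    match n with
    | 0 => simp [ha0]
    | 1 =>
      rw [Finset.sum_range_succ, Finset.sum_range_one]
      simp [ha0, ha1, pow_one, ← hπ]
    | (m + 2) =>
      rw [Finset.sum_range_succ, coeff_self_pow s h0, ← hπ]
      have hrec := logCoeff_eq s (m + 2) (by omega)
      rw [← ha, ← hπ] at hrec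
      set S := ∑ k ∈ Finset.range (m + 2), a k * PowerSeries.coeff (R := K) (m + 2) (s ^ k) with hS
      rw [hrec]
      have hd2 := hd (m + 2) (by omega)
      field_simp
      ring
  refine ⟨PowerSeries.mk a, ⟨?_, ?_, ?_⟩, ?_⟩
  · simp [PowerSeries.constantCoeff_mk, ha0]
  · simp [PowerSeries.coeff_mk, ha1]
  · rw [hchar]
    intro n
    simpa [PowerSeries.coeff_mk] using hsum n
  · rintro g ⟨hg0, hg1, hgc⟩
    rw [hchar] at hgc
    ext n
    induction n using Nat.strong_induction_on with
    | _ n ih =>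
      match n with
      | 0 => simpa [PowerSeries.coeff_mk, ha0, ← PowerSeries.coeff_zero_eq_constantCoeff] using hg0
      | 1 => simp [PowerSeries.coeff_mk, ha1, hg1]
      | (m + 2) =>
        have h1 := hgc (m + 2)
        rw [Finset.sum_range_succ, coeff_self_pow s h0, ← hπ] at h1
        have h2 : ∑ k ∈ Finset.range (m + 2), PowerSeries.coeff (R := K) k g *
            PowerSeries.coeff (R := K) (m + 2) (s ^ k)
            = ∑ k ∈ Finset.range (m + 2), a k * PowerSeries.coeff (R := K) (m + 2) (s ^ k) := by
          refine Finset.sum_congr rfl fun k hk => ?_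
          have := ih k (by simpa using Finset.mem_range.mp hk)
          rw [PowerSeries.coeff_mk] at this
          rw [this]
        rw [h2] at h1
        have hrec := logCoeff_eq s (m + 2) (by omega)
        rw [← ha, ← hπ] at hrec
        rw [PowerSeries.coeff_mk, hrec, eq_div_iff (hd (m + 2) (by omega))]
        linear_combination -h1
end

section
/- If two formal power series s, t ∈ X·O_K[[X]] commute under composition, both have linear coefficients that are nonzero and not roots of unity, then the logarithms Log_s and Log_t (the unique series g with g'(0)=1 and g∘s = s'(0)·g, respectively for t) coincide. -/
open PowerSeries

section Aux

variable {R : Type*} [CommRing R]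

lemma psAux_dvd_sub_mul {N : ℕ} {a b c d : PowerSeries R}
    (h1 : (X : PowerSeries R) ^ N ∣ a - b) (h2 : (X : PowerSeries R) ^ N ∣ c - d) :
    (X : PowerSeries R) ^ N ∣ a * c - b * d := by
  have h : a * c - b * d = a * (c - d) + (a - b) * d := by ring
  rw [h]
  exact dvd_add (h2.mul_left a) (h1.mul_right d)

lemma psAux_coeff_eq_of_dvd {N : ℕ} {a b : PowerSeries R}
    (h : (X : PowerSeries R) ^ N ∣ a - b) {m : ℕ} (hm : m < N) :
    PowerSeries.coeff m a = PowerSeries.coeff m b := by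
  rw [PowerSeries.X_pow_dvd_iff] at h
  have := h m hm
  rwa [map_sub, sub_eq_zero] at this

lemma psAux_pow_dvd_sub_pow {N : ℕ} {a b : PowerSeries R}
    (h : (X : PowerSeries R) ^ N ∣ a - b) (k : ℕ) :
    (X : PowerSeries R) ^ N ∣ a ^ k - b ^ k :=
  dvd_trans h (sub_dvd_pow_sub_pow a b k)

lemma psAux_trunc_dvd (f : PowerSeries R) (N : ℕ) :
    (X : PowerSeries R) ^ N ∣ f - ((f.trunc N : Polynomial R) : PowerSeries R) := by
  rw [PowerSeries.X_pow_dvd_iff]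
  intro m hm
  simp [Polynomial.coeff_coe, PowerSeries.coeff_trunc, hm]

lemma psAux_coeff_pow_eq_zero {g : PowerSeries R} (hg : constantCoeff g = 0)
    {k m : ℕ} (h : m < k) : PowerSeries.coeff m (g ^ k) = 0 := by
  have hX : (X : PowerSeries R) ∣ g := PowerSeries.X_dvd_iff.mpr hg
  have hd : (X : PowerSeries R) ^ k ∣ g ^ k := pow_dvd_pow_of_dvd hX k
  rw [PowerSeries.X_pow_dvd_iff] at hd
  exact hd m h

lemma psAux_poly_coeff_pow_eq_zero {P : Polynomial R} (hP : P.coeff 0 = 0)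
    {k m : ℕ} (h : m < k) : (P ^ k).coeff m = 0 := by
  have h0 : constantCoeff (P : PowerSeries R) = 0 := by
    rw [← PowerSeries.coeff_zero_eq_constantCoeff_apply, Polynomial.coeff_coe]
    exact hP
  have := psAux_coeff_pow_eq_zero h0 h
  rwa [← Polynomial.coe_pow, Polynomial.coeff_coe] at this

lemma psAux_coeff_comp (W Q : Polynomial R) (hQ : Q.coeff 0 = 0) (m : ℕ) :
    (W.comp Q).coeff m = ∑ k ∈ Finset.range (m + 1), W.coeff k * (Q ^ k).coeff m := by
  rw [Polynomial.comp_eq_sum_left, Polynomial.sum, Polynomial.finset_sum_coeff]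
  simp only [Polynomial.coeff_C_mul]
  have h1 : ∑ k ∈ W.support, W.coeff k * (Q ^ k).coeff m
      = ∑ k ∈ W.support ∪ Finset.range (m + 1), W.coeff k * (Q ^ k).coeff m := by
    apply Finset.sum_subset Finset.subset_union_left
    intro x _ hnx
    rw [Polynomial.notMem_support_iff.mp hnx, zero_mul]
  have h2 : ∑ k ∈ Finset.range (m + 1), W.coeff k * (Q ^ k).coeff m
      = ∑ k ∈ W.support ∪ Finset.range (m + 1), W.coeff k * (Q ^ k).coeff m := by
    apply Finset.sum_subset Finset.subset_union_right
    intro x hx hnx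
    have hmx : m < x := by
      simp only [Finset.mem_range, not_lt] at hnx
      omega
    rw [psAux_poly_coeff_pow_eq_zero hQ hmx, mul_zero]
  rw [h1, ← h2]

lemma psAux_coeff_PSComp {f g : PowerSeries R} (hg : constantCoeff g = 0) (m : ℕ) :
    PowerSeries.coeff m (PSComp f g)
      = ∑ k ∈ Finset.range (m + 1),
          PowerSeries.coeff k f * PowerSeries.coeff m (g ^ k) := by
  rw [PSComp, PowerSeries.coeff_mk]
  have hQ : (g.trunc (m + 1)).coeff 0 = 0 := by
    rw [PowerSeries.coeff_trunc, if_pos (by omega), PowerSeries.coeff_zero_eq_constantCoeff_apply,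
      hg]
  rw [psAux_coeff_comp _ _ hQ]
  apply Finset.sum_congr rfl
  intro k hk
  rw [PowerSeries.coeff_trunc, if_pos (Finset.mem_range.mp hk)]
  congr 1
  have hd := psAux_pow_dvd_sub_pow (psAux_trunc_dvd g (m + 1)) k
  have := psAux_coeff_eq_of_dvd hd (show m < m + 1 by omega)
  rw [← Polynomial.coe_pow, Polynomial.coeff_coe] at this
  exact this.symm

lemma psAux_coeff_PSComp_le {f g : PowerSeries R} (hg : constantCoeff g = 0)
    {m n : ℕ} (hmn : m ≤ n) :
    PowerSeries.coeff m (PSComp f g)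
      = ∑ k ∈ Finset.range (n + 1),
          PowerSeries.coeff k f * PowerSeries.coeff m (g ^ k) := by
  rw [psAux_coeff_PSComp hg m]
  apply Finset.sum_subset (Finset.range_subset_range.mpr (by omega))
  intro x hx hnx
  have : m < x := by
    simp only [Finset.mem_range, not_lt] at hnx
    omega
  rw [psAux_coeff_pow_eq_zero hg this, mul_zero]

lemma psAux_PSComp_C_mul {c : R} {f g : PowerSeries R} (hg : constantCoeff g = 0) :
    PSComp (PowerSeries.C c * f) g = PowerSeries.C c * PSComp f g := by
  ext m
  rw [psAux_coeff_PSComp hg, PowerSeries.coeff_C_mul, psAux_coeff_PSComp hg, Finset.mul_sum]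
  apply Finset.sum_congr rfl
  intro k _
  rw [PowerSeries.coeff_C_mul]
  ring

lemma psAux_PSComp_sub {a b g : PowerSeries R} (hg : constantCoeff g = 0) :
    PSComp (a - b) g = PSComp a g - PSComp b g := by
  ext m
  rw [map_sub, psAux_coeff_PSComp hg, psAux_coeff_PSComp hg, psAux_coeff_PSComp hg,
    ← Finset.sum_sub_distrib]
  apply Finset.sum_congr rfl
  intro k _
  rw [map_sub]
  ring

lemma psAux_PSComp_trunc_dvd {f g : PowerSeries R} (hg : constantCoeff g = 0) (n : ℕ) :
    (X : PowerSeries R) ^ (n + 1)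
      ∣ PSComp f g - (((f.trunc (n + 1)).comp (g.trunc (n + 1)) : Polynomial R) : PowerSeries R) := by
  rw [PowerSeries.X_pow_dvd_iff]
  intro m hm
  have hQ : (g.trunc (n + 1)).coeff 0 = 0 := by
    rw [PowerSeries.coeff_trunc, if_pos (by omega), PowerSeries.coeff_zero_eq_constantCoeff_apply,
      hg]
  rw [map_sub, Polynomial.coeff_coe, psAux_coeff_comp _ _ hQ, psAux_coeff_PSComp hg]
  rw [sub_eq_zero]
  apply Finset.sum_congr rfl
  intro k hk
  have hkm : k < m + 1 := Finset.mem_range.mp hk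
  rw [PowerSeries.coeff_trunc, if_pos (by omega)]
  congr 1
  have hd := psAux_pow_dvd_sub_pow (psAux_trunc_dvd g (n + 1)) k
  have := psAux_coeff_eq_of_dvd hd hm
  rw [← Polynomial.coe_pow, Polynomial.coeff_coe] at this
  exact this

lemma psAux_PSComp_mul {a b g : PowerSeries R} (hg : constantCoeff g = 0) :
    PSComp (a * b) g = PSComp a g * PSComp b g := by
  ext n
  set A := a.trunc (n + 1) with hA
  set B := b.trunc (n + 1) with hB
  set Q := g.trunc (n + 1) with hQdef
  have hQ : Q.coeff 0 = 0 := by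
    rw [hQdef, PowerSeries.coeff_trunc, if_pos (by omega),
      PowerSeries.coeff_zero_eq_constantCoeff_apply, hg]
  -- RHS
  have hra := psAux_PSComp_trunc_dvd (f := a) hg n
  have hrb := psAux_PSComp_trunc_dvd (f := b) hg n
  have hRHS : PowerSeries.coeff n (PSComp a g * PSComp b g)
      = ((A.comp Q) * (B.comp Q)).coeff n := by
    have := psAux_coeff_eq_of_dvd (psAux_dvd_sub_mul hra hrb) (show n < n + 1 by omega)
    rw [this, ← Polynomial.coe_mul, Polynomial.coeff_coe]
  rw [hRHS, ← Polynomial.mul_comp, psAux_coeff_comp _ _ hQ, psAux_coeff_PSComp_le hg (le_refl n)]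
  apply Finset.sum_congr rfl
  intro k hk
  have hkn : k < n + 1 := Finset.mem_range.mp hk
  have hab : (X : PowerSeries R) ^ (n + 1) ∣ a * b - ((A * B : Polynomial R) : PowerSeries R) := by
    rw [Polynomial.coe_mul]
    exact psAux_dvd_sub_mul (psAux_trunc_dvd a (n + 1)) (psAux_trunc_dvd b (n + 1))
  have h1 : PowerSeries.coeff k (a * b) = (A * B).coeff k := by
    rw [psAux_coeff_eq_of_dvd hab hkn, Polynomial.coeff_coe]
  have h2 : PowerSeries.coeff n (g ^ k) = (Q ^ k).coeff n := by
    have hd := psAux_pow_dvd_sub_pow (psAux_trunc_dvd g (n + 1)) k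
    have := psAux_coeff_eq_of_dvd hd (show n < n + 1 by omega)
    rw [← Polynomial.coe_pow, Polynomial.coeff_coe] at this
    exact this
  rw [h1, h2]

lemma psAux_PSComp_one {g : PowerSeries R} (hg : constantCoeff g = 0) :
    PSComp 1 g = 1 := by
  ext m
  rw [psAux_coeff_PSComp hg]
  rw [Finset.sum_eq_single 0]
  · simp
  · intro k _ hk
    rw [PowerSeries.coeff_one, if_neg hk, zero_mul]
  · intro h
    exact absurd (Finset.mem_range.mpr (by omega)) h

lemma psAux_PSComp_pow {s t : PowerSeries R} (ht : constantCoeff t = 0) (j : ℕ) :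
    PSComp (s ^ j) t = (PSComp s t) ^ j := by
  induction j with
  | zero => simpa using psAux_PSComp_one ht
  | succ j ih => rw [pow_succ, psAux_PSComp_mul ht, ih, pow_succ]

lemma psAux_constantCoeff_PSComp {s t : PowerSeries R}
    (hs : constantCoeff s = 0) (ht : constantCoeff t = 0) :
    constantCoeff (PSComp s t) = 0 := by
  rw [← PowerSeries.coeff_zero_eq_constantCoeff_apply, psAux_coeff_PSComp ht]
  simp [PowerSeries.coeff_zero_eq_constantCoeff_apply, hs]

lemma psAux_PSComp_assoc {f s t : PowerSeries R}
    (hs : constantCoeff s = 0) (ht : constantCoeff t = 0) :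
    PSComp (PSComp f s) t = PSComp f (PSComp s t) := by
  have hst : constantCoeff (PSComp s t) = 0 := psAux_constantCoeff_PSComp hs ht
  ext n
  have hL : PowerSeries.coeff n (PSComp (PSComp f s) t)
      = ∑ k ∈ Finset.range (n + 1),
          PowerSeries.coeff k (PSComp f s) * PowerSeries.coeff n (t ^ k) :=
    psAux_coeff_PSComp ht n
  have hR : PowerSeries.coeff n (PSComp f (PSComp s t))
      = ∑ j ∈ Finset.range (n + 1),
          PowerSeries.coeff j f * PowerSeries.coeff n ((PSComp s t) ^ j) :=
    psAux_coeff_PSComp hst n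
  rw [hL, hR]
  have hmid : ∀ k ∈ Finset.range (n + 1),
      PowerSeries.coeff k (PSComp f s) * PowerSeries.coeff n (t ^ k)
        = ∑ j ∈ Finset.range (n + 1),
            PowerSeries.coeff j f * (PowerSeries.coeff k (s ^ j)
              * PowerSeries.coeff n (t ^ k)) := by
    intro k hk
    rw [psAux_coeff_PSComp_le hs (Nat.le_of_lt_succ (Finset.mem_range.mp hk)), Finset.sum_mul]
    apply Finset.sum_congr rfl
    intro j _
    ring
  rw [Finset.sum_congr rfl hmid, Finset.sum_comm]
  apply Finset.sum_congr rfl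
  intro j _
  rw [← Finset.mul_sum]
  congr 1
  rw [← psAux_PSComp_pow ht j, psAux_coeff_PSComp_le ht (le_refl n)]

lemma psAux_coeff_pow_self {g : PowerSeries R} (hg : constantCoeff g = 0) (n : ℕ) :
    PowerSeries.coeff n (g ^ n) = (PowerSeries.coeff 1 g) ^ n := by
  obtain ⟨u, hu⟩ := PowerSeries.X_dvd_iff.mpr hg
  subst hu
  rw [mul_pow]
  have h1 : PowerSeries.coeff n ((X : PowerSeries R) ^ n * u ^ n)
      = PowerSeries.coeff 0 (u ^ n) := by
    have := PowerSeries.coeff_X_pow_mul (u ^ n) n 0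
    simpa using this
  have h2 : PowerSeries.coeff 1 ((X : PowerSeries R) * u) = PowerSeries.coeff 0 u := by
    simpa using PowerSeries.coeff_succ_X_mul 0 u
  rw [h1, h2, PowerSeries.coeff_zero_eq_constantCoeff_apply,
    PowerSeries.coeff_zero_eq_constantCoeff_apply, map_pow]

lemma psAux_coeff_one_PSComp {f g : PowerSeries R} (hg : constantCoeff g = 0) :
    PowerSeries.coeff 1 (PSComp f g)
      = PowerSeries.coeff 1 f * PowerSeries.coeff 1 g := by
  rw [psAux_coeff_PSComp hg, Finset.sum_range_succ, Finset.sum_range_one]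
  simp [PowerSeries.coeff_one]

lemma psAux_eq_zero_of_functional {K : Type*} [Field K] {t f : PowerSeries K}
    (ht0 : constantCoeff t = 0) (htne : PowerSeries.coeff 1 t ≠ 0)
    (htru : ∀ n : ℕ, 0 < n → (PowerSeries.coeff 1 t) ^ n ≠ 1)
    (hf0 : constantCoeff f = 0) (hf1 : PowerSeries.coeff 1 f = 0)
    (heq : PSComp f t = PowerSeries.C (PowerSeries.coeff 1 t) * f) : f = 0 := by
  ext n
  rw [map_zero]
  induction n using Nat.strong_induction_on with
  | _ n ih =>
  match n, ih with
  | 0, _ => simpa using hf0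
  | 1, _ => exact hf1
  | (m + 2), ih =>
    have hc := congrArg (PowerSeries.coeff (m + 2)) heq
    rw [psAux_coeff_PSComp ht0, PowerSeries.coeff_C_mul, Finset.sum_range_succ] at hc
    have hz : ∀ k ∈ Finset.range (m + 2),
        PowerSeries.coeff k f * PowerSeries.coeff (m + 2) (t ^ k) = 0 := by
      intro k hk
      rw [ih k (Finset.mem_range.mp hk), zero_mul]
    rw [Finset.sum_eq_zero hz, zero_add, psAux_coeff_pow_self ht0] at hc
    have hmain : PowerSeries.coeff (m + 2) f
        * ((PowerSeries.coeff 1 t) ^ (m + 2) - PowerSeries.coeff 1 t) = 0 := by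
      linear_combination hc
    rcases mul_eq_zero.mp hmain with h | h
    · exact h
    · exfalso
      have h' : ((PowerSeries.coeff 1 t) ^ (m + 1) - 1) * PowerSeries.coeff 1 t = 0 := by
        linear_combination h
      rcases mul_eq_zero.mp h' with h'' | h''
      · exact htru (m + 1) (Nat.succ_pos m) (by linear_combination h'')
      · exact htne h''

end Aux

/-- If `s, t ∈ X·O_K[[X]]` commute under composition and both have linear coefficients that
are nonzero and not roots of unity, then their logarithms (the unique series `g` with
`g(0) = 0`, `g'(0) = 1`, `g ∘ s = s'(0)·g`, resp. for `t`) coincide. -/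
theorem logarithms_of_commuting_series_coincide
    {p : ℕ} [Fact p.Prime] (K : Type*) [NormedField K]
    [Algebra ℚ_[p] K] [FiniteDimensional ℚ_[p] K]
    (hiso : ∀ x : ℚ_[p], ‖algebraMap ℚ_[p] K x‖ = ‖x‖)
    (hna : ∀ x y : K, ‖x + y‖ ≤ max ‖x‖ ‖y‖)
    (s t : PowerSeries K)
    (hsint : ∀ n : ℕ, ‖PowerSeries.coeff n s‖ ≤ 1)
    (htint : ∀ n : ℕ, ‖PowerSeries.coeff n t‖ ≤ 1)
    (hs0 : PowerSeries.constantCoeff s = 0)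
    (ht0 : PowerSeries.constantCoeff t = 0)
    (hsne : PowerSeries.coeff 1 s ≠ 0)
    (htne : PowerSeries.coeff 1 t ≠ 0)
    (hsru : ∀ n : ℕ, 0 < n → (PowerSeries.coeff 1 s) ^ n ≠ 1)
    (htru : ∀ n : ℕ, 0 < n → (PowerSeries.coeff 1 t) ^ n ≠ 1)
    (hcomm : PSComp s t = PSComp t s)
    (g h : PowerSeries K)
    (hg : PowerSeries.constantCoeff g = 0 ∧ PowerSeries.coeff 1 g = 1 ∧
      PSComp g s = PowerSeries.C (PowerSeries.coeff 1 s) * g)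
    (hh : PowerSeries.constantCoeff h = 0 ∧ PowerSeries.coeff 1 h = 1 ∧
      PSComp h t = PowerSeries.C (PowerSeries.coeff 1 t) * h) :
    g = h := by
  obtain ⟨hg0, hg1, hgs⟩ := hg
  obtain ⟨hh0, hh1, hht⟩ := hh
  -- Step 1: `g ∘ t` satisfies the functional equation of `g` w.r.t. `s`.
  have hF : PSComp (PSComp g t) s
      = PowerSeries.C (PowerSeries.coeff 1 s) * PSComp g t := by
    calc PSComp (PSComp g t) s
        = PSComp g (PSComp t s) := psAux_PSComp_assoc ht0 hs0
      _ = PSComp g (PSComp s t) := by rw [hcomm]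
      _ = PSComp (PSComp g s) t := (psAux_PSComp_assoc hs0 ht0).symm
      _ = PSComp (PowerSeries.C (PowerSeries.coeff 1 s) * g) t := by rw [hgs]
      _ = PowerSeries.C (PowerSeries.coeff 1 s) * PSComp g t := psAux_PSComp_C_mul ht0
  -- Step 2: by uniqueness, `g ∘ t = t'(0) · g`.
  have hG : PSComp g t = PowerSeries.C (PowerSeries.coeff 1 t) * g := by
    have key : PSComp g t - PowerSeries.C (PowerSeries.coeff 1 t) * g = 0 := by
      apply psAux_eq_zero_of_functional hs0 hsne hsru
      · rw [map_sub, psAux_constantCoeff_PSComp hg0 ht0, map_mul, PowerSeries.constantCoeff_C,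
          hg0, mul_zero, sub_zero]
      · rw [map_sub, psAux_coeff_one_PSComp ht0, hg1, PowerSeries.coeff_C_mul, hg1, one_mul,
          mul_one, sub_self]
      · rw [psAux_PSComp_sub hs0, psAux_PSComp_C_mul hs0, hF, hgs]
        ring
    exact sub_eq_zero.mp key
  -- Step 3: `g - h` satisfies the functional equation of `h` w.r.t. `t` with zero linear term.
  have key2 : g - h = 0 := by
    apply psAux_eq_zero_of_functional ht0 htne htru
    · rw [map_sub, hg0, hh0, sub_zero]
    · rw [map_sub, hg1, hh1, sub_self]
    · rw [psAux_PSComp_sub ht0, hG, hht]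
      ring
  exact sub_eq_zero.mp key2
end

section
/- Let K be a finite extension of ℚ_p with ramification index e satisfying gcd(e, p-1) = 1, and let f ∈ X·O_K[[X]] be such that f'(0) is a uniformizer of ℤ_p (i.e., v_p(f'(0)) = 1), f has Weierstrass degree p (exactly p roots counted with multiplicity in the open unit disk), and all p−1 nonzero roots of f have valuation v_K equal to e/(p−1). Then the Weierstrass polynomial of f(X)/X is irreducible over K. -/
open PowerSeries

/-- Evaluation of a power series over `K` at a point of `Cp` (converges when the
coefficients are bounded and `‖x‖ < 1`). -/
noncomputable def PSEval {K Cp : Type*} [NormedField K] [NormedField Cp] [Algebra K Cp]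
    (f : PowerSeries K) (x : Cp) : Cp :=
  ∑' n : ℕ, algebraMap K Cp (PowerSeries.coeff n f) * x ^ n

lemma aux_norm_sum_lt {M ι : Type*} [SeminormedAddCommGroup M] [IsUltrametricDist M]
    {s : Finset ι} {f : ι → M} {C : ℝ} (hC : 0 < C) (h : ∀ i ∈ s, ‖f i‖ < C) :
    ‖∑ i ∈ s, f i‖ < C := by
  rcases s.eq_empty_or_nonempty with rfl | hs
  · simpa using hC
  · obtain ⟨i, hi, hle⟩ := IsUltrametricDist.exists_norm_finset_sum_le_of_nonempty hs f
    exact hle.trans_lt (h i hi)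

section Aux

variable {K Cp : Type*} [NormedField K] [NormedField Cp] [Algebra K Cp]

lemma aux_summable (hCp : ∀ x : K, ‖algebraMap K Cp x‖ = ‖x‖)
    {g : PowerSeries K} (hg : ∀ n, ‖PowerSeries.coeff n g‖ ≤ 1)
    {z : Cp} (hz : ‖z‖ < 1) :
    Summable fun n => ‖algebraMap K Cp (PowerSeries.coeff n g) * z ^ n‖ := by
  apply Summable.of_nonneg_of_le (fun n => norm_nonneg _) (fun n => ?_)
    (summable_geometric_of_lt_one (norm_nonneg z) hz)
  rw [norm_mul, norm_pow, hCp]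
  exact mul_le_of_le_one_left (pow_nonneg (norm_nonneg z) n) (hg n)

lemma aux_PSEval_mul [CompleteSpace Cp] (hCp : ∀ x : K, ‖algebraMap K Cp x‖ = ‖x‖)
    {g h : PowerSeries K} (hg : ∀ n, ‖PowerSeries.coeff n g‖ ≤ 1)
    (hh : ∀ n, ‖PowerSeries.coeff n h‖ ≤ 1)
    {z : Cp} (hz : ‖z‖ < 1) :
    PSEval (g * h) z = PSEval g z * PSEval h z := by
  rw [PSEval, PSEval, PSEval,
    tsum_mul_tsum_eq_tsum_sum_antidiagonal_of_summable_norm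
      (aux_summable hCp hg hz) (aux_summable hCp hh hz)]
  congr 1
  funext n
  rw [PowerSeries.coeff_mul, map_sum, Finset.sum_mul]
  apply Finset.sum_congr rfl
  rintro ⟨i, j⟩ hij
  rw [Finset.HasAntidiagonal.mem_antidiagonal] at hij
  simp only
  rw [map_mul, ← hij, pow_add]
  ring

lemma aux_PSEval_X (z : Cp) : PSEval (PowerSeries.X : PowerSeries K) z = z := by
  rw [PSEval, tsum_eq_single 1 (fun n hn => ?_)]
  · simp
  · rw [PowerSeries.coeff_X, if_neg hn]
    simp

lemma aux_PSEval_poly (P : Polynomial K) (z : Cp) :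
    PSEval (P : PowerSeries K) z = Polynomial.eval₂ (algebraMap K Cp) z P := by
  rw [PSEval, tsum_eq_sum (s := Finset.range (P.natDegree + 1)) (fun n hn => ?_),
    Polynomial.eval₂_eq_sum_range]
  · exact Finset.sum_congr rfl fun i _ => by rw [Polynomial.coeff_coe]
  · rw [Polynomial.coeff_coe, Polynomial.coeff_eq_zero_of_natDegree_lt
      (by simpa using Finset.mem_range.not.mp hn)]
    simp

end Aux

/-- Let `K/ℚ_p` have ramification index `e` with `gcd(e, p-1) = 1`, and let
`f ∈ X·O_K[[X]]` with `f'(0)` a uniformizer of `ℤ_p`, Weierstrass degree `p`, and all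
`p - 1` nonzero roots of `f` in the open unit disk of `ℂ_p` of valuation `v_K = e/(p-1)`
(i.e. `v_p = 1/(p-1)`).  Then the Weierstrass polynomial of `f(X)/X` is irreducible
over `K`. -/
theorem weierstrass_polynomial_irreducible
    {p : ℕ} [Fact p.Prime] (K : Type*) [NormedField K]
    [Algebra ℚ_[p] K] [FiniteDimensional ℚ_[p] K]
    (hiso : ∀ x : ℚ_[p], ‖algebraMap ℚ_[p] K x‖ = ‖x‖)
    (hKna : ∀ x y : K, ‖x + y‖ ≤ max ‖x‖ ‖y‖)
    -- ramification index e of K/ℚ_p, with gcd(e, p-1) = 1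
    (e : ℕ) (he : 0 < e)
    (hvalgrp : ∀ x : K, x ≠ 0 → ∃ m : ℤ, ‖x‖ = (p : ℝ) ^ (-(m : ℝ) / (e : ℝ)))
    (hram : ∃ x : K, x ≠ 0 ∧ ‖x‖ = (p : ℝ) ^ (-(1 : ℝ) / (e : ℝ)))
    (hgcd : Nat.gcd e (p - 1) = 1)
    -- the field ℂ_p
    (Cp : Type*) [NormedField Cp] [IsAlgClosed Cp] [CompleteSpace Cp] [Algebra K Cp]
    (hCp : ∀ x : K, ‖algebraMap K Cp x‖ = ‖x‖)
    (hna : ∀ x y : Cp, ‖x + y‖ ≤ max ‖x‖ ‖y‖)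
    -- the series f
    (f : PowerSeries K)
    (hint : ∀ n : ℕ, ‖PowerSeries.coeff n f‖ ≤ 1)
    (h0 : PowerSeries.constantCoeff f = 0)
    (hunif : ∃ a : ℚ_[p], ‖a‖ = (p : ℝ)⁻¹ ∧ algebraMap ℚ_[p] K a = PowerSeries.coeff 1 f)
    (hWdeg : (∀ n : ℕ, n < p → ‖PowerSeries.coeff n f‖ < 1) ∧ ‖PowerSeries.coeff p f‖ = 1)
    (hroots : ∀ x : Cp, ‖x‖ < 1 → x ≠ 0 → PSEval f x = 0 →
      ‖x‖ = (p : ℝ) ^ (-(1 : ℝ) / ((p : ℝ) - 1)))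
    -- the Weierstrass factorization f = X · P · U
    (P : Polynomial K) (U : PowerSeries K)
    (hP : P.Monic) (hPdeg : P.natDegree = p - 1)
    (hPint : ∀ n : ℕ, ‖P.coeff n‖ ≤ 1)
    (hUint : ∀ n : ℕ, ‖PowerSeries.coeff n U‖ ≤ 1)
    (hUunit : ‖PowerSeries.constantCoeff U‖ = 1)
    (hfac : f = PowerSeries.X * ((P : PowerSeries K) * U)) :
    Irreducible P := by
  haveI instK : IsUltrametricDist K :=
    IsUltrametricDist.isUltrametricDist_of_forall_norm_add_le_max_norm hKna
  haveI instCp : IsUltrametricDist Cp :=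
    IsUltrametricDist.isUltrametricDist_of_forall_norm_add_le_max_norm hna
  set φ := algebraMap K Cp with hφ
  have hp2 : 2 ≤ p := (Fact.out : p.Prime).two_le
  have hp1R : (1 : ℝ) < (p : ℝ) := by exact_mod_cast hp2.trans_lt' one_lt_two
  set r0 : ℝ := (p : ℝ) ^ (-(1 : ℝ) / ((p : ℝ) - 1)) with hr0
  have hr0pos : 0 < r0 := Real.rpow_pos_of_pos (by linarith) _
  have hr0lt1 : r0 < 1 := by
    rw [hr0]
    apply Real.rpow_lt_one_of_one_lt_of_neg hp1R
    apply div_neg_of_neg_of_pos (by norm_num)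
    have : (2:ℝ) ≤ (p:ℝ) := by exact_mod_cast hp2
    linarith
  -- coefficient facts
  have hPc : ∀ n : ℕ, ‖PowerSeries.coeff n (P : PowerSeries K)‖ ≤ 1 := by
    intro n; rw [Polynomial.coeff_coe]; exact hPint n
  have hXc : ∀ n : ℕ, ‖PowerSeries.coeff n (PowerSeries.X : PowerSeries K)‖ ≤ 1 := by
    intro n
    rw [PowerSeries.coeff_X]
    split <;> simp
  have hPUc : ∀ n : ℕ, ‖PowerSeries.coeff n ((P : PowerSeries K) * U)‖ ≤ 1 := by
    intro n
    rw [PowerSeries.coeff_mul]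
    apply IsUltrametricDist.norm_sum_le_of_forall_le_of_nonneg zero_le_one
    rintro ⟨i, j⟩ _
    rw [norm_mul]
    exact mul_le_one₀ (hPc i) (norm_nonneg _) (hUint j)
  have hU0 : ‖PowerSeries.coeff 0 U‖ = 1 := by
    rw [PowerSeries.coeff_zero_eq_constantCoeff]; exact hUunit
  -- coefficients of P below the top are small
  have hPUlt : ∀ n : ℕ, n < p - 1 → ‖PowerSeries.coeff n ((P : PowerSeries K) * U)‖ < 1 := by
    intro n hn
    have h1 := hWdeg.1 (n + 1) (by omega)
    rwa [hfac, PowerSeries.coeff_succ_X_mul] at h1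
  have hPlt : ∀ i : ℕ, i < p - 1 → ‖P.coeff i‖ < 1 := by
    intro i
    induction i using Nat.strong_induction_on with
    | _ i ih =>
      intro hi
      have hkey : P.coeff i * PowerSeries.coeff 0 U
          = PowerSeries.coeff i ((P : PowerSeries K) * U)
            - ∑ x ∈ (Finset.HasAntidiagonal.antidiagonal i).erase (i, 0),
                PowerSeries.coeff x.1 (P : PowerSeries K) * PowerSeries.coeff x.2 U := by
        rw [PowerSeries.coeff_mul, ← Finset.sum_erase_add _ _
          ((Finset.HasAntidiagonal.mem_antidiagonal (a := ((i, 0) : ℕ × ℕ))).mpr (by simp))]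
        simp [Polynomial.coeff_coe]
      have hrest : ‖∑ x ∈ (Finset.HasAntidiagonal.antidiagonal i).erase (i, 0),
          PowerSeries.coeff x.1 (P : PowerSeries K) * PowerSeries.coeff x.2 U‖ < 1 := by
        apply aux_norm_sum_lt one_pos
        rintro ⟨a, b⟩ hab
        obtain ⟨hne, hmem⟩ := Finset.mem_erase.mp hab
        rw [Finset.HasAntidiagonal.mem_antidiagonal] at hmem
        have ha : a < i := by
          rcases Nat.lt_or_ge a i with h | h
          · exact h
          · exfalso; apply hne; have : a = i := le_antisymm (by omega) h
            subst this; simp at hmem ⊢; omega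
        rw [norm_mul, Polynomial.coeff_coe]
        calc ‖P.coeff a‖ * ‖PowerSeries.coeff b U‖ ≤ ‖P.coeff a‖ * 1 :=
              mul_le_mul_of_nonneg_left (hUint b) (norm_nonneg _)
          _ = ‖P.coeff a‖ := mul_one _
          _ < 1 := ih a ha (by omega)
      have : ‖P.coeff i * PowerSeries.coeff 0 U‖ < 1 := by
        rw [hkey, sub_eq_add_neg]
        have := IsUltrametricDist.norm_add_le_max
          (PowerSeries.coeff i ((P : PowerSeries K) * U))
          (-(∑ x ∈ (Finset.HasAntidiagonal.antidiagonal i).erase (i, 0),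
                PowerSeries.coeff x.1 (P : PowerSeries K) * PowerSeries.coeff x.2 U))
        rw [norm_neg] at this
        exact this.trans_lt (max_lt (hPUlt i hi) hrest)
      rwa [norm_mul, hU0, mul_one] at this
  -- ‖P.coeff 0‖ = 1/p
  have hf1 : ‖PowerSeries.coeff 1 f‖ = (p : ℝ)⁻¹ := by
    obtain ⟨a, ha, hae⟩ := hunif
    rw [← hae, hiso, ha]
  have hP0 : ‖P.coeff 0‖ = (p : ℝ)⁻¹ := by
    have h1 : PowerSeries.coeff 1 f = P.coeff 0 * PowerSeries.coeff 0 U := by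
      rw [hfac, show (1 : ℕ) = 0 + 1 from rfl, PowerSeries.coeff_succ_X_mul,
        PowerSeries.coeff_mul]
      simp [Polynomial.coeff_coe]
    rw [h1, norm_mul, hU0, mul_one] at hf1
    exact hf1
  have hP0ne : P.coeff 0 ≠ 0 := by
    intro h
    rw [h, norm_zero] at hP0
    have : (0:ℝ) < (p:ℝ)⁻¹ := by positivity
    linarith [hP0 ▸ this]
  -- all roots of P in Cp have norm r0
  have hφinj : Function.Injective φ := (algebraMap K Cp).injective
  have hrootP : ∀ z : Cp, Polynomial.eval₂ φ z P = 0 → ‖z‖ = r0 := by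
    intro z hz
    have hzlt : ‖z‖ < 1 := by
      by_contra hge
      push_neg at hge
      have hzpos : (0:ℝ) < ‖z‖ ^ (p - 1) := pow_pos (lt_of_lt_of_le one_pos hge) _
      have hPtop : P.coeff (p - 1) = 1 := by
        rw [← hPdeg]; exact hP.coeff_natDegree
      have hev : Polynomial.eval₂ φ z P
          = (∑ i ∈ Finset.range (p - 1), φ (P.coeff i) * z ^ i) + z ^ (p - 1) := by
        rw [Polynomial.eval₂_eq_sum_range, hPdeg, Finset.sum_range_succ, hPtop]
        simp
      have hsmall : ‖∑ i ∈ Finset.range (p - 1), φ (P.coeff i) * z ^ i‖ < ‖z‖ ^ (p - 1) := by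
        apply aux_norm_sum_lt hzpos
        intro i hi
        rw [Finset.mem_range] at hi
        rw [norm_mul, norm_pow, hφ, hCp]
        calc ‖P.coeff i‖ * ‖z‖ ^ i < 1 * ‖z‖ ^ i := by
              apply mul_lt_mul_of_pos_right (hPlt i hi) (pow_pos (lt_of_lt_of_le one_pos hge) _)
          _ = ‖z‖ ^ i := one_mul _
          _ ≤ ‖z‖ ^ (p - 1) := pow_le_pow_right₀ hge (le_of_lt hi)
      have hne : ‖∑ i ∈ Finset.range (p - 1), φ (P.coeff i) * z ^ i‖ ≠ ‖z ^ (p - 1)‖ := by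
        rw [norm_pow]; exact ne_of_lt hsmall
      have hmax := IsUltrametricDist.norm_add_eq_max_of_norm_ne_norm hne
      rw [← hev, hz, norm_zero] at hmax
      have hv := le_max_right ‖∑ i ∈ Finset.range (p - 1), φ (P.coeff i) * z ^ i‖
        ‖z ^ (p - 1)‖
      rw [← hmax, norm_pow] at hv
      linarith
    have hzne : z ≠ 0 := by
      rintro rfl
      rw [Polynomial.eval₂_at_zero] at hz
      exact hP0ne (hφinj (by rw [hz, map_zero]))
    have hfz : PSEval f z = 0 := by
      have : PSEval f z = z * (Polynomial.eval₂ φ z P * PSEval U z) := by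
        rw [hfac, aux_PSEval_mul hCp hXc hPUc hzlt, aux_PSEval_X,
          aux_PSEval_mul hCp hPc hUint hzlt, aux_PSEval_poly]
      rw [this, hz, zero_mul, mul_zero]
    exact hroots z hzlt hzne hfz
  -- the final irreducibility argument
  constructor
  · intro hu
    have h1 : P.natDegree = 0 := Polynomial.natDegree_eq_zero_iff_degree_le_zero.mpr
      (le_of_eq (Polynomial.isUnit_iff_degree_eq_zero.mp hu))
    omega
  · intro a b hab
    by_contra hcon
    push_neg at hcon
    obtain ⟨hua, hub⟩ := hcon
    have hPne : P ≠ 0 := hP.ne_zero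
    have hane : a ≠ 0 := fun h => hPne (by rw [hab, h, zero_mul])
    have hbne : b ≠ 0 := fun h => hPne (by rw [hab, h, mul_zero])
    have hunit_of_deg0 : ∀ c : Polynomial K, c ≠ 0 → c.natDegree = 0 → IsUnit c := by
      intro c hc h
      rw [Polynomial.eq_C_of_natDegree_eq_zero h]
      apply Polynomial.isUnit_C.mpr
      apply isUnit_iff_ne_zero.mpr
      intro h0'
      apply hc
      rw [Polynomial.eq_C_of_natDegree_eq_zero h, h0', map_zero]
    have hda : 0 < a.natDegree := Nat.pos_of_ne_zero fun h => hua (hunit_of_deg0 a hane h)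
    have hdb : 0 < b.natDegree := Nat.pos_of_ne_zero fun h => hub (hunit_of_deg0 b hbne h)
    have hdsum : a.natDegree + b.natDegree = p - 1 := by
      rw [← hPdeg, hab, Polynomial.natDegree_mul hane hbne]
    set d := a.natDegree with hdd
    have hdlt : d < p - 1 := by omega
    set A := a.map φ with hAdef
    have hAne : A ≠ 0 := Polynomial.map_ne_zero hane
    have hsplit : A.Splits := IsAlgClosed.splits A
    have hcard : A.roots.card = d := by
      rw [Polynomial.splits_iff_card_roots.mp hsplit, hAdef, Polynomial.natDegree_map]
    have hrootnorm : ∀ r ∈ A.roots, ‖r‖ = r0 := by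
      intro r hr
      have hr' : A.eval r = 0 := (Polynomial.mem_roots hAne).mp hr
      apply hrootP
      have : Polynomial.eval₂ φ r P = Polynomial.eval₂ φ r a * Polynomial.eval₂ φ r b := by
        rw [hab, Polynomial.eval₂_mul]
      rw [this, ← Polynomial.eval_map, ← hAdef, hr', zero_mul]
    have hprod := hsplit.eq_prod_roots
    have hnorm0 : ‖A.eval 0‖ = ‖A.leadingCoeff‖ * r0 ^ d := by
      conv_lhs => rw [hprod]
      rw [Polynomial.eval_mul, Polynomial.eval_C, norm_mul, Polynomial.eval_multiset_prod,
        Multiset.map_map]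
      congr 1
      have heach : ∀ x ∈ (A.roots.map fun r => Polynomial.eval 0
          ((Polynomial.X : Polynomial Cp) - Polynomial.C r)), ‖x‖ = r0 := by
        intro x hx
        obtain ⟨r, hr, rfl⟩ := Multiset.mem_map.mp hx
        simp only [Polynomial.eval_sub, Polynomial.eval_X, Polynomial.eval_C, zero_sub,
          norm_neg]
        exact hrootnorm r hr
      -- norm of a multiset product
      have : ∀ (s : Multiset Cp), (∀ x ∈ s, ‖x‖ = r0) → ‖s.prod‖ = r0 ^ s.card := by
        intro s
        induction s using Multiset.induction with
        | empty => intro _; simp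
        | cons c t ih =>
          intro hs
          rw [Multiset.prod_cons, norm_mul, hs c (Multiset.mem_cons_self c t),
            ih (fun x hx => hs x (Multiset.mem_cons_of_mem hx)), Multiset.card_cons, pow_succ]
          ring
      rw [Function.comp_def, this _ heach, Multiset.card_map, hcard]
    have hlcne : a.leadingCoeff ≠ 0 := Polynomial.leadingCoeff_ne_zero.mpr hane
    have hx : ‖a.coeff 0 / a.leadingCoeff‖ = r0 ^ d := by
      rw [norm_div]
      have h1 : A.eval 0 = φ (a.coeff 0) := by
        rw [← Polynomial.coeff_zero_eq_eval_zero, hAdef, Polynomial.coeff_map]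
      have h2 : A.leadingCoeff = φ a.leadingCoeff := by
        rw [hAdef, Polynomial.leadingCoeff_map]
      rw [h1, h2, hφ, hCp, hCp] at hnorm0
      rw [hnorm0]
      exact mul_div_cancel_left₀ _ (norm_ne_zero_iff.mpr hlcne)
    have hxne : a.coeff 0 / a.leadingCoeff ≠ 0 := by
      intro h
      rw [h, norm_zero] at hx
      exact absurd hx.symm (ne_of_gt (pow_pos hr0pos d))
    obtain ⟨m, hm⟩ := hvalgrp _ hxne
    have hppos : (0:ℝ) < (p:ℝ) := by linarith
    have hr0d : r0 ^ d = (p:ℝ) ^ (-(d:ℝ)/((p:ℝ)-1)) := by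
      rw [hr0, ← Real.rpow_natCast ((p:ℝ) ^ (-(1:ℝ)/((p:ℝ)-1))) d, ← Real.rpow_mul hppos.le]
      congr 1
      ring
    have hexp : -(d:ℝ)/((p:ℝ)-1) = -(m:ℝ)/(e:ℝ) := by
      have heq : (p:ℝ) ^ (-(d:ℝ)/((p:ℝ)-1)) = (p:ℝ) ^ (-(m:ℝ)/(e:ℝ)) := by
        rw [← hr0d, ← hx, hm]
      have h1 := (Real.rpow_le_rpow_left_iff hp1R).mp heq.le
      have h2 := (Real.rpow_le_rpow_left_iff hp1R).mp heq.ge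
      linarith
    have hp1ne : ((p:ℝ)-1) ≠ 0 := by linarith
    have hene : (e:ℝ) ≠ 0 := Nat.cast_ne_zero.mpr he.ne'
    have hreal : (d:ℝ) * e = (m:ℝ) * ((p:ℝ)-1) := by
      field_simp at hexp
      linarith
    have hcast : ((p:ℝ)-1) = ((p-1 : ℕ) : ℝ) := by
      have : (1:ℕ) ≤ p := by omega
      push_cast [Nat.cast_sub this]
      ring
    have hintEq : (d * e : ℤ) = m * ((p - 1 : ℕ) : ℤ) := by
      have : ((d * e : ℤ) : ℝ) = ((m * ((p-1:ℕ):ℤ) : ℤ) : ℝ) := by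
        push_cast
        rw [← hcast]
        exact hreal
      exact_mod_cast this
    have hdvd : (p - 1 : ℕ) ∣ d * e := by
      have : ((p - 1 : ℕ) : ℤ) ∣ (d * e : ℤ) := ⟨m, by linarith [hintEq]⟩
      exact_mod_cast this
    have hcop : Nat.Coprime (p - 1) e := Nat.Coprime.symm hgcd
    have hfin : (p - 1) ∣ d := hcop.dvd_of_dvd_mul_right hdvd
    have := Nat.le_of_dvd hda hfin
    omega
end

section
/- In the setting above, the element ϖ_n = (a^{∘m}(π_{(n+m)r} mod ω_L))_{m≥0} of R is not algebraic over 𝔽_p for any n ≥ 0; consequently, the ring homomorphism 𝔽_q[[X_n]] → R sending X_n to ϖ_n is injective, and the kernel of the induced map φ_ϖ : A_∞(O_L) → R equals ω_L·A_∞(O_L). -/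
open PowerSeries

noncomputable def PSIter {R : Type*} [CommRing R] (f : PowerSeries R) : ℕ → PowerSeries R
  | 0 => PowerSeries.X
  | n + 1 => PSComp f (PSIter f n)

/-- The elements `ϖ_n = φ_ϖ(X_n)` of the tilt `R` are transcendental over `𝔽_p`; consequently
the induced maps `𝔽_q[[X_n]] → R` are injective and the kernel of
`φ_ϖ : A_∞(O_L) → R` is exactly `ω_L · A_∞(O_L)`.  Here `R` is an integral domain of
characteristic `p` equipped with a multiplicative nonarchimedean absolute value `v`, and the
`ϖ_n` are topologically nilpotent: `0 < v(ϖ_n) < 1`. -/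
theorem kernel_of_phi_pi_eq_span_omega
    {p : ℕ} [Fact p.Prime]
    (O : Type*) [CommRing O] [IsDomain O] [IsDiscreteValuationRing O]
    (ω : O) (hω : Irreducible ω)
    (r : ℕ) (hr : 0 < r) (q : ℕ) (hq : q = p ^ r)
    (hres : Nat.card (O ⧸ Ideal.span {ω}) = q)
    (hchar : CharP (O ⧸ Ideal.span {ω}) p)
    (f : PowerSeries O) (hf0 : PowerSeries.constantCoeff f = 0)
    -- the universal f^{∘r}-consistent ring A = A_∞(O_L)
    (A : Type*) [CommRing A] [Algebra O A]
    (ι : ℕ → (PowerSeries O →ₐ[O] A))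
    (hιinj : ∀ n : ℕ, Function.Injective (ι n))
    (hcompat : ∀ (n : ℕ) (g : PowerSeries O), ι n g = ι (n + 1) (PSComp g (PSIter f r)))
    (hdense : ∀ (x : A) (k : ℕ), ∃ (n : ℕ) (g : PowerSeries O),
      x - ι n g ∈ (Ideal.span {algebraMap O A ω}) ^ k)
    (hcomplete : IsAdicComplete (Ideal.span {algebraMap O A ω}) A)
    -- the perfect characteristic-p ring R (the tilt), with its absolute value v
    (R : Type*) [CommRing R] [IsDomain R] [CharP R p] [PerfectRing R p]
    (v : R → ℝ)
    (hv0 : ∀ x : R, v x = 0 ↔ x = 0)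
    (hv1 : v 1 = 1)
    (hvmul : ∀ x y : R, v (x * y) = v x * v y)
    (hvadd : ∀ x y : R, v (x + y) ≤ max (v x) (v y))
    -- the G_L-equivariant map φ_ϖ with φ_ϖ(X_n) = ϖ_n
    (φ : A →+* R)
    (hφω : φ (algebraMap O A ω) = 0)
    (hϖ : ∀ n : ℕ, 0 < v (φ (ι n PowerSeries.X)) ∧ v (φ (ι n PowerSeries.X)) < 1) :
    -- (1) each ϖ_n is not algebraic over 𝔽_p
    (∀ n : ℕ, ¬ ∃ P : Polynomial (ZMod p), P ≠ 0 ∧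
      Polynomial.eval₂ (ZMod.castHom (dvd_refl p) R) (φ (ι n PowerSeries.X)) P = 0) ∧
    -- (2) the induced maps 𝔽_q[[X_n]] → R are injective
    (∀ (n : ℕ) (g : PowerSeries O), φ (ι n g) = 0 →
      ∀ k : ℕ, PowerSeries.coeff k g ∈ Ideal.span {ω}) ∧
    -- (3) ker φ_ϖ = ω · A_∞(O_L)
    RingHom.ker φ = Ideal.span {algebraMap O A ω} := by
  classical
  have hRnt : (0 : R) ≠ 1 := zero_ne_one
  have hvz : v 0 = 0 := (hv0 0).mpr rfl
  have hπne : ∀ n : ℕ, φ (ι n PowerSeries.X) ≠ 0 := by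
    intro n h
    have h1 := (hϖ n).1
    rw [h, hvz] at h1
    exact lt_irrefl 0 h1
  have hvpow : ∀ (x : R) (i : ℕ), v (x ^ i) = v x ^ i := by
    intro x i
    induction i with
    | zero => simpa using hv1
    | succ k ih => rw [pow_succ, pow_succ, hvmul, ih]
  have hvnat : ∀ m : ℕ, v ((m : R)) ≤ 1 := by
    intro m
    induction m with
    | zero => rw [Nat.cast_zero, hvz]; norm_num
    | succ k ih =>
      push_cast
      exact le_trans (hvadd _ _) (max_le ih hv1.le)
  have hvcast : ∀ c : ZMod p, v ((ZMod.castHom (dvd_refl p) R) c) ≤ 1 := by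
    intro c
    have hcv : ((c.val : ℕ) : ZMod p) = c := ZMod.natCast_rightInverse c
    rw [← hcv, map_natCast]
    exact hvnat _
  -- polynomial evaluations at π_n have v ≤ 1
  have L1 : ∀ (n : ℕ) (Q : Polynomial (ZMod p)),
      v (Polynomial.eval₂ (ZMod.castHom (dvd_refl p) R) (φ (ι n PowerSeries.X)) Q) ≤ 1 := by
    intro n Q
    induction Q using Polynomial.induction_on' with
    | add a b ha hb =>
      rw [Polynomial.eval₂_add]
      exact le_trans (hvadd _ _) (max_le ha hb)
    | monomial i c =>
      rw [Polynomial.eval₂_monomial, hvmul, hvpow]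
      have h1 : v (φ (ι n PowerSeries.X)) ^ i ≤ 1 :=
        pow_le_one₀ (hϖ n).1.le (hϖ n).2.le
      have h2 : 0 < v (φ (ι n PowerSeries.X)) ^ i := pow_pos (hϖ n).1 i
      nlinarith [hvcast c]
  -- the case of a polynomial with nonzero constant coefficient
  have unitcase : ∀ (n : ℕ) (P : Polynomial (ZMod p)), P.coeff 0 ≠ 0 →
      Polynomial.eval₂ (ZMod.castHom (dvd_refl p) R) (φ (ι n PowerSeries.X)) P = 0 → False := by
    intro n P h0 hev
    have hsplit : φ (ι n PowerSeries.X) *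
        Polynomial.eval₂ (ZMod.castHom (dvd_refl p) R) (φ (ι n PowerSeries.X)) P.divX
        + (ZMod.castHom (dvd_refl p) R) (P.coeff 0) = 0 := by
      rw [← hev]
      conv_rhs => rw [← Polynomial.X_mul_divX_add P]
      rw [Polynomial.eval₂_add, Polynomial.eval₂_mul, Polynomial.eval₂_X, Polynomial.eval₂_C]
    have hcu : (ZMod.castHom (dvd_refl p) R) (P.coeff 0) *
        (ZMod.castHom (dvd_refl p) R) (P.coeff 0)⁻¹ = 1 := by
      rw [← map_mul, mul_inv_cancel₀ h0, map_one]
    have hπE : φ (ι n PowerSeries.X) *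
        Polynomial.eval₂ (ZMod.castHom (dvd_refl p) R) (φ (ι n PowerSeries.X)) P.divX
        = -(ZMod.castHom (dvd_refl p) R) (P.coeff 0) :=
      eq_neg_of_add_eq_zero_left hsplit
    have hy : φ (ι n PowerSeries.X) *
        (-(Polynomial.eval₂ (ZMod.castHom (dvd_refl p) R) (φ (ι n PowerSeries.X)) P.divX *
          (ZMod.castHom (dvd_refl p) R) (P.coeff 0)⁻¹)) = 1 := by
      have h3 : φ (ι n PowerSeries.X) *
          (-(Polynomial.eval₂ (ZMod.castHom (dvd_refl p) R) (φ (ι n PowerSeries.X)) P.divX *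
            (ZMod.castHom (dvd_refl p) R) (P.coeff 0)⁻¹)) =
          -(φ (ι n PowerSeries.X) *
            Polynomial.eval₂ (ZMod.castHom (dvd_refl p) R) (φ (ι n PowerSeries.X)) P.divX) *
          (ZMod.castHom (dvd_refl p) R) (P.coeff 0)⁻¹ := by ring
      rw [h3, hπE, neg_neg, hcu]
    have hvy : v (φ (ι n PowerSeries.X)) *
        v (-(Polynomial.eval₂ (ZMod.castHom (dvd_refl p) R) (φ (ι n PowerSeries.X)) P.divX *
          (ZMod.castHom (dvd_refl p) R) (P.coeff 0)⁻¹)) = 1 := by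
      rw [← hvmul, hy, hv1]
    have hb : v (-(Polynomial.eval₂ (ZMod.castHom (dvd_refl p) R) (φ (ι n PowerSeries.X)) P.divX *
        (ZMod.castHom (dvd_refl p) R) (P.coeff 0)⁻¹)) ≤ 1 := by
      have hEi : -(Polynomial.eval₂ (ZMod.castHom (dvd_refl p) R) (φ (ι n PowerSeries.X)) P.divX *
          (ZMod.castHom (dvd_refl p) R) (P.coeff 0)⁻¹) =
          Polynomial.eval₂ (ZMod.castHom (dvd_refl p) R) (φ (ι n PowerSeries.X))
            (-(P.divX * Polynomial.C (P.coeff 0)⁻¹)) := by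
        rw [Polynomial.eval₂_neg, Polynomial.eval₂_mul, Polynomial.eval₂_C]
      rw [hEi]
      exact L1 n _
    nlinarith [hvy, hb, (hϖ n).1, (hϖ n).2]
  have main : ∀ (d n : ℕ) (P : Polynomial (ZMod p)), P.natDegree ≤ d → P ≠ 0 →
      Polynomial.eval₂ (ZMod.castHom (dvd_refl p) R) (φ (ι n PowerSeries.X)) P = 0 → False := by
    intro d
    induction d with
    | zero =>
      intro n P hdeg hP0 hev
      rcases eq_or_ne (P.coeff 0) 0 with h0 | h0
      · exact hP0 (by rw [Polynomial.eq_C_of_natDegree_le_zero hdeg, h0, map_zero])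
      · exact unitcase n P h0 hev
    | succ d ih =>
      intro n P hdeg hP0 hev
      rcases eq_or_ne (P.coeff 0) 0 with h0 | h0
      · have hfac : P = Polynomial.X * P.divX := by
          conv_lhs => rw [← Polynomial.X_mul_divX_add P]
          rw [h0, map_zero, add_zero]
        have hdvx0 : P.divX ≠ 0 := by
          intro h; apply hP0; rw [hfac, h, mul_zero]
        have hdeg' : P.divX.natDegree ≤ d := by
          have h4 := Polynomial.natDegree_divX_eq_natDegree_tsub_one (p := P)
          omega
        have hev' : φ (ι n PowerSeries.X) *
            Polynomial.eval₂ (ZMod.castHom (dvd_refl p) R) (φ (ι n PowerSeries.X)) P.divX = 0 := by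
          rw [hfac, Polynomial.eval₂_mul, Polynomial.eval₂_X] at hev
          exact hev
        rcases mul_eq_zero.mp hev' with h | h
        · exact hπne n h
        · exact ih n P.divX hdeg' hdvx0 h
      · exact unitcase n P h0 hev
  have part1 : ∀ n : ℕ, ¬ ∃ P : Polynomial (ZMod p), P ≠ 0 ∧
      Polynomial.eval₂ (ZMod.castHom (dvd_refl p) R) (φ (ι n PowerSeries.X)) P = 0 := by
    rintro n ⟨P, hP0, hev⟩
    exact main P.natDegree n P le_rfl hP0 hev
  -- Part (2)
  have base2 : ∀ (n : ℕ) (g : PowerSeries O), φ (ι n g) = 0 →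
      PowerSeries.constantCoeff g ∈ Ideal.span {ω} := by
    intro n g hg
    by_contra hc
    have hne : PowerSeries.constantCoeff g ≠ 0 := by
      intro h; exact hc (by rw [h]; exact Ideal.zero_mem _)
    obtain ⟨m, u, hmu⟩ := IsDiscreteValuationRing.eq_unit_mul_pow_irreducible hne hω
    cases m with
    | zero =>
      have hcc : PowerSeries.constantCoeff g = (u : O) := by rw [hmu, pow_zero, mul_one]
      have h1 := PowerSeries.mul_invOfUnit g u hcc
      have h2 : φ (ι n g) * φ (ι n (g.invOfUnit u)) = 1 := by
        rw [← map_mul, ← map_mul, h1, map_one, map_one]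
      rw [hg, zero_mul] at h2
      exact hRnt h2
    | succ m =>
      apply hc
      rw [hmu]
      exact Ideal.mem_span_singleton.mpr ⟨u * ω ^ m, by ring⟩
  have key2 : ∀ (n : ℕ) (g : PowerSeries O), φ (ι n g) = 0 →
      ∀ k : ℕ, PowerSeries.coeff k g ∈ Ideal.span {ω} := by
    intro n g hg k
    induction k generalizing g with
    | zero =>
      rw [PowerSeries.coeff_zero_eq_constantCoeff_apply]
      exact base2 n g hg
    | succ k ih =>
      obtain ⟨a, ha⟩ := Ideal.mem_span_singleton'.mp (base2 n g hg)
      have hdecomp : g = PowerSeries.C (PowerSeries.constantCoeff g) +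
          PowerSeries.X * PowerSeries.mk (fun i => PowerSeries.coeff (i + 1) g) := by
        ext j
        cases j with
        | zero =>
          simp [PowerSeries.coeff_zero_eq_constantCoeff_apply]
        | succ j =>
          rw [map_add, PowerSeries.coeff_succ_X_mul, PowerSeries.coeff_mk, PowerSeries.coeff_C]
          simp
      have hC0 : φ (ι n (PowerSeries.C (PowerSeries.constantCoeff g))) = 0 := by
        rw [PowerSeries.C_eq_algebraMap, (ι n).commutes, ← ha, map_mul, map_mul, hφω, mul_zero]
      have h3 : φ (ι n g) = φ (ι n (PowerSeries.C (PowerSeries.constantCoeff g))) +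
          φ (ι n PowerSeries.X) *
            φ (ι n (PowerSeries.mk (fun i => PowerSeries.coeff (i + 1) g))) := by
        conv_lhs => rw [hdecomp]
        rw [map_add, map_mul, map_add, map_mul]
      rw [hg, hC0, zero_add] at h3
      have hg'0 : φ (ι n (PowerSeries.mk (fun i => PowerSeries.coeff (i + 1) g))) = 0 := by
        rcases mul_eq_zero.mp h3.symm with h | h
        · exact absurd h (hπne n)
        · exact h
      have h5 := ih _ hg'0
      simpa using h5
  -- Part (3)
  have key3 : RingHom.ker φ = Ideal.span {algebraMap O A ω} := by
    apply le_antisymm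
    · intro x hx
      have hx0 : φ x = 0 := RingHom.mem_ker.mp hx
      obtain ⟨n, g, hng⟩ := hdense x 1
      rw [pow_one] at hng
      have hφdiff : φ (x - ι n g) = 0 := by
        obtain ⟨c, hc⟩ := Ideal.mem_span_singleton'.mp hng
        rw [← hc, map_mul, hφω, mul_zero]
      have hφg : φ (ι n g) = 0 := by
        have h6 : φ x - φ (ι n g) = 0 := by rw [← map_sub]; exact hφdiff
        rw [hx0, zero_sub, neg_eq_zero] at h6
        exact h6
      choose a ha using fun k => Ideal.mem_span_singleton'.mp (key2 n g hφg k)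
      have hgfac : g = PowerSeries.C ω * PowerSeries.mk a := by
        ext k
        rw [PowerSeries.coeff_C_mul, PowerSeries.coeff_mk, ← ha k]
        ring
      have hmem : ι n g ∈ Ideal.span {algebraMap O A ω} := by
        rw [hgfac, map_mul, PowerSeries.C_eq_algebraMap, (ι n).commutes]
        exact Ideal.mem_span_singleton.mpr ⟨ι n (PowerSeries.mk a), rfl⟩
      have h7 : x = (x - ι n g) + ι n g := by ring
      rw [h7]
      exact Ideal.add_mem _ hng hmem
    · intro x hx
      obtain ⟨c, hc⟩ := Ideal.mem_span_singleton'.mp hx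
      have : φ x = 0 := by rw [← hc, map_mul, hφω, mul_zero]
      exact this
  exact ⟨part1, key2, key3⟩
end
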